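/- Let R be an integral domain (a not necessarily commutative ring with no non-zero zero divisors) and a a non-zero non-invertible element of R. Then: (1) if R/aR is a uniserial right R-module, then a is a rigid element of R; (2) if moreover R is a right Bézout domain, then R/aR is a uniserial right R-module if and only if a is a rigid element of R. -/

import Mathlib

open MulOpposite

universe u

/-- The product `A·B` of two right ideals of `R` (right ideals are `Rᵐᵒᵖ`-submodules of `R`):
the set of all finite sums of products `a * b` with `a ∈ A`, `b ∈ B`. -/
def rmul {R : Type u} [Ring R] (A B : Submodule Rᵐᵒᵖ R) : Submodule Rᵐᵒᵖ R :=
  Submodule.span Rᵐᵒᵖ {x : R | ∃ a ∈ A, ∃ b ∈ B, x = a * b}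

/-- The product `A₁⋯Aₙ` of a (possibly empty) list of right ideals. -/
def rprod {R : Type u} [Ring R] : List (Submodule Rᵐᵒᵖ R) → Submodule Rᵐᵒᵖ R
  | [] => ⊤
  | [A] => A
  | A :: l => rmul A (rprod l)

/-- A finite family of right ideals is coindependent if `Aᵢ + ⋂_{j ≠ i} Aⱼ = R` for every `i`. -/
def Coindep {R : Type u} [Ring R] {n : ℕ} (A : Fin n → Submodule Rᵐᵒᵖ R) : Prop :=
  ∀ i, A i ⊔ (⨅ j, ⨅ (_ : j ≠ i), A j) = ⊤

/-- A module is uniserial if its submodules are linearly ordered by inclusion. -/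
def IsUniserialMod (S : Type*) [Ring S] (M : Type*) [AddCommGroup M] [Module S M] : Prop :=
  ∀ N P : Submodule S M, N ≤ P ∨ P ≤ N

/-- A right ideal is a two-sided ideal if it is also closed under left multiplication. -/
def IsTwoSidedRid {R : Type u} [Ring R] (A : Submodule Rᵐᵒᵖ R) : Prop :=
  ∀ (r : R), ∀ x ∈ A, r * x ∈ A

/-- A serial factorization of a right ideal `A`: a factorization `A = A₁⋯Aₙ` into proper
right ideals that pairwise commute, form a coindependent family, and are such that every
quotient `R/Aᵢ` is a uniserial right `R`-module. -/
def IsSerialFact {R : Type u} [Ring R] {n : ℕ} (A : Submodule Rᵐᵒᵖ R)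
    (F : Fin n → Submodule Rᵐᵒᵖ R) : Prop :=
  (∀ i, F i ≠ ⊤) ∧ (∀ i j, rmul (F i) (F j) = rmul (F j) (F i)) ∧ Coindep F ∧
    (∀ i, IsUniserialMod Rᵐᵒᵖ (R ⧸ F i)) ∧ A = rprod (List.ofFn F)

/-- A right ideal has a serial factorization if it admits one of some length. -/
def HasSerialFact {R : Type u} [Ring R] (A : Submodule Rᵐᵒᵖ R) : Prop :=
  ∃ (n : ℕ) (F : Fin n → Submodule Rᵐᵒᵖ R), IsSerialFact A F

/-- A right chain ring: its right ideals are linearly ordered by inclusion. -/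
def IsRightChainRing (R : Type u) [Ring R] : Prop :=
  ∀ A B : Submodule Rᵐᵒᵖ R, A ≤ B ∨ B ≤ A

/-- A ring is right duo if every right ideal is a two-sided ideal. -/
def IsRightDuo (R : Type u) [Ring R] : Prop :=
  ∀ A : Submodule Rᵐᵒᵖ R, IsTwoSidedRid A

/-- The principal right ideal `rR`. -/
def rspan {R : Type u} [Ring R] (r : R) : Submodule Rᵐᵒᵖ R :=
  Submodule.span Rᵐᵒᵖ ({r} : Set R)

/-- An element of a (possibly noncommutative) integral domain is rigid if it is non-zero,
non-invertible, and whenever `a = xy' = yx'`, then `x = yu` or `y = xu` for some `u`. -/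
def IsRigid {R : Type u} [Ring R] (a : R) : Prop :=
  a ≠ 0 ∧ ¬IsUnit a ∧
    ∀ x y x' y' : R, a = x * y' → a = y * x' →
      (∃ u : R, x = y * u) ∨ (∃ u : R, y = x * u)

/-- A right Bézout domain: every finitely generated right ideal is principal. -/
def IsRightBezout (R : Type u) [Ring R] : Prop :=
  ∀ A : Submodule Rᵐᵒᵖ R, A.FG → ∃ a : R, A = rspan a

def rspan' {R : Type u} [Ring R] (r : R) : Submodule Rᵐᵒᵖ R :=
  Submodule.span Rᵐᵒᵖ ({r} : Set R)

lemma mem_rspan' {R : Type u} [Ring R] {x y : R} :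
    x ∈ rspan' y ↔ ∃ r : R, x = y * r := by
  rw [rspan', Submodule.mem_span_singleton]
  constructor
  · rintro ⟨r, rfl⟩; exact ⟨r.unop, rfl⟩
  · rintro ⟨r, rfl⟩; exact ⟨op r, rfl⟩

/-- Key step: if `a = y * x'` and `π x ∈ span {π y}` in `R ⧸ aR`, then `y` divides `x`. -/
lemma aux_div {R : Type u} [Ring R] {a x y x' : R} (hyx : a = y * x')
    (h : (rspan' a).mkQ x ∈ Submodule.span Rᵐᵒᵖ {(rspan' a).mkQ y}) :
    ∃ u : R, x = y * u := by
  obtain ⟨r, hr⟩ := Submodule.mem_span_singleton.mp h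
  have hr' : (rspan' a).mkQ (y * r.unop) = (rspan' a).mkQ x := hr
  have hsub : x - y * r.unop ∈ rspan' a :=
    (Submodule.Quotient.eq (rspan' a)).mp hr'.symm
  obtain ⟨t, ht⟩ := mem_rspan'.mp hsub
  refine ⟨r.unop + x' * t, ?_⟩
  have : y * (r.unop + x' * t) = y * r.unop + (x - y * r.unop) := by
    rw [mul_add, ← mul_assoc, ← hyx, ← ht]
  rw [this]; abel

/-- Lemma (vhip): for a non-zero non-invertible element `a` of an integral domain `R`,
(1) if `R/aR` is uniserial then `a` is rigid; (2) if moreover `R` is right Bézout, then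
`R/aR` is uniserial iff `a` is rigid. -/
theorem statement18 {R : Type u} [Ring R] [IsDomain R]
    (a : R) (ha : a ≠ 0) (hu : ¬IsUnit a) :
    (IsUniserialMod Rᵐᵒᵖ (R ⧸ rspan a) → IsRigid a) ∧
    (IsRightBezout R → (IsUniserialMod Rᵐᵒᵖ (R ⧸ rspan a) ↔ IsRigid a)) := by
  have hrs : ∀ r : R, rspan r = rspan' r := fun r => rfl
  have part1 : IsUniserialMod Rᵐᵒᵖ (R ⧸ rspan a) → IsRigid a := by
    intro hU
    refine ⟨ha, hu, fun x y x' y' hxy hyx => ?_⟩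
    rcases hU (Submodule.span Rᵐᵒᵖ {(rspan a).mkQ x})
        (Submodule.span Rᵐᵒᵖ {(rspan a).mkQ y}) with h | h
    · left
      exact aux_div hyx (h (Submodule.mem_span_singleton_self _))
    · right
      exact aux_div hxy (h (Submodule.mem_span_singleton_self _))
  refine ⟨part1, fun hB => ⟨part1, ?_⟩⟩
  intro hR N P
  by_cases hNP : N ≤ P
  · exact Or.inl hNP
  · right
    obtain ⟨xb, hxN, hxP⟩ := SetLike.not_le_iff_exists.mp hNP
    obtain ⟨x, rfl⟩ := Submodule.Quotient.mk_surjective _ xb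
    intro yb hyP
    obtain ⟨y, rfl⟩ := Submodule.Quotient.mk_surjective _ yb
    -- C = xR + aR, D = yR + aR
    have hCfg : (rspan' x ⊔ rspan' a).FG := by
      apply Submodule.FG.sup <;> exact Submodule.fg_span_singleton _
    have hDfg : (rspan' y ⊔ rspan' a).FG := by
      apply Submodule.FG.sup <;> exact Submodule.fg_span_singleton _
    obtain ⟨c, hc⟩ := hB _ hCfg
    obtain ⟨d, hd⟩ := hB _ hDfg
    rw [hrs] at hc hd
    have haC : a ∈ rspan' c := by
      rw [← hc]; exact Submodule.mem_sup_right (Submodule.mem_span_singleton_self _)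
    have haD : a ∈ rspan' d := by
      rw [← hd]; exact Submodule.mem_sup_right (Submodule.mem_span_singleton_self _)
    obtain ⟨c', hc'⟩ := mem_rspan'.mp haC
    obtain ⟨d', hd'⟩ := mem_rspan'.mp haD
    rcases hR.2.2 c d d' c' hc' hd' with ⟨u, hcu⟩ | ⟨u, hdu⟩
    · -- c = d * u : then x ∈ cR ⊆ dR = yR + aR, so mk x ∈ P, contradiction
      exfalso
      have hxC : x ∈ rspan' c := by
        rw [← hc]; exact Submodule.mem_sup_left (Submodule.mem_span_singleton_self _)
      have hcd : rspan' c ≤ rspan' d := by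
        rw [rspan', Submodule.span_le, Set.singleton_subset_iff]
        exact mem_rspan'.mpr ⟨u, hcu⟩
      have hxD : x ∈ rspan' y ⊔ rspan' a := hd ▸ hcd hxC
      obtain ⟨p, hp, q, hq, hpq⟩ := Submodule.mem_sup.mp hxD
      obtain ⟨r, rfl⟩ := mem_rspan'.mp hp
      apply hxP
      have : (Submodule.Quotient.mk x : R ⧸ rspan a) = op r • Submodule.Quotient.mk y := by
        rw [← hpq]
        refine (Submodule.Quotient.eq _).mpr ?_
        simpa [hrs] using hq
      rw [this]
      exact P.smul_mem _ hyP
    · -- d = c * u : then y ∈ dR ⊆ cR = xR + aR, so mk y ∈ N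
      have hyD : y ∈ rspan' d := by
        rw [← hd]; exact Submodule.mem_sup_left (Submodule.mem_span_singleton_self _)
      have hdc : rspan' d ≤ rspan' c := by
        rw [rspan', Submodule.span_le, Set.singleton_subset_iff]
        exact mem_rspan'.mpr ⟨u, hdu⟩
      have hyC : y ∈ rspan' x ⊔ rspan' a := hc ▸ hdc hyD
      obtain ⟨p, hp, q, hq, hpq⟩ := Submodule.mem_sup.mp hyC
      obtain ⟨r, rfl⟩ := mem_rspan'.mp hp
      have : (Submodule.Quotient.mk y : R ⧸ rspan a) = op r • Submodule.Quotient.mk x := by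
        rw [← hpq]
        refine (Submodule.Quotient.eq _).mpr ?_
        simpa [hrs] using hq
      rw [this]
      exact N.smul_mem _ hxN
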